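/- Let K be a real-valued field and let M be a K°-module which is the union of a directed (filtered) family of submodules M_i. Then cont(M) = inf_i cont(M_i). -/

import Mathlib

open scoped NNReal

/-- The content of a module `M` over a ring `R` equipped with an absolute value `v`:
the infimum, over all finitely presented subquotients of `M` decomposed as
`⊕ᵢ R/πᵢR`, of `∏ᵢ v πᵢ`. -/
noncomputable def content (R : Type*) [CommRing R] (v : R → ℝ≥0)
    (M : Type*) [AddCommGroup M] [Module R M] : ℝ≥0 :=
  sInf { r | ∃ (N₁ : Submodule R M) (N₂ : Submodule R ↥N₁) (n : ℕ) (π : Fin n → R),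
    Nonempty ((↥N₁ ⧸ N₂) ≃ₗ[R] ((i : Fin n) → R ⧸ Ideal.span {π i})) ∧
    r = ∏ i, v (π i) }

section Aux

variable {R : Type*} [CommRing R] (v : R → ℝ≥0)
  {M : Type*} [AddCommGroup M] [Module R M]

/-- The defining set of `content`. -/
def contentSet (R : Type*) [CommRing R] (v : R → ℝ≥0)
    (M : Type*) [AddCommGroup M] [Module R M] : Set ℝ≥0 :=
  { r | ∃ (N₁ : Submodule R M) (N₂ : Submodule R ↥N₁) (n : ℕ) (π : Fin n → R),
    Nonempty ((↥N₁ ⧸ N₂) ≃ₗ[R] ((i : Fin n) → R ⧸ Ideal.span {π i})) ∧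
    r = ∏ i, v (π i) }

lemma content_eq : content R v M = sInf (contentSet R v M) := rfl

lemma one_mem_contentSet : (1 : ℝ≥0) ∈ contentSet R v M := by
  refine ⟨⊥, ⊤, 0, ![], ⟨?_⟩, by simp⟩
  exact LinearEquiv.ofSubsingleton _ _

lemma contentSet_submodule_subset (P : Submodule R M) :
    contentSet R v ↥P ⊆ contentSet R v M := by
  rintro r ⟨N₁, N₂, n, π, ⟨f⟩, rfl⟩
  refine ⟨N₁.map P.subtype,
    N₂.map (Submodule.equivMapOfInjective P.subtype P.injective_subtype N₁).toLinearMap, n, π, ⟨?_⟩, rfl⟩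
  exact (Submodule.Quotient.equiv N₂ _
    (Submodule.equivMapOfInjective P.subtype P.injective_subtype N₁) rfl).symm.trans f

lemma content_le_of_submodule (P : Submodule R M) :
    content R v M ≤ content R v ↥P :=
  csInf_le_csInf (OrderBot.bddBelow _) ⟨1, one_mem_contentSet v⟩
    (contentSet_submodule_subset v P)

end Aux


theorem content_of_directed_union_gen
    {R : Type*} [CommRing R] (v : R → ℝ≥0)
    {M : Type*} [AddCommGroup M] [Module R M]
    {ι : Type*} [Nonempty ι] (N : ι → Submodule R M)
    (hdir : ∀ i j, ∃ k, N i ≤ N k ∧ N j ≤ N k)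
    (hunion : ∀ x : M, ∃ i, x ∈ N i) :
    content R v M = ⨅ i, content R v ↥(N i) := by
  classical
  refine le_antisymm
    (le_ciInf fun i => content_le_of_submodule v (N i)) ?_
  rw [content_eq]
  refine le_csInf ⟨1, one_mem_contentSet v⟩ ?_
  rintro r ⟨N₁, N₂, n, π, ⟨e⟩, rfl⟩
  -- lifts of the standard generators
  have hz : ∀ j : Fin n, ∃ z : ↥N₁,
      Submodule.Quotient.mk z = e.symm (Pi.single j 1) := fun j =>
    Submodule.Quotient.mk_surjective N₂ _
  choose z hzspec using hz
  -- find a single index k containing all lifts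
  have hD : Directed (· ≤ ·) N := fun i j => hdir i j
  choose idx hidx using fun j : Fin n => hunion ((z j : M))
  obtain ⟨k, hk⟩ := hD.finset_le (Finset.image idx Finset.univ)
  have hzk : ∀ j, ((z j : M)) ∈ N k := fun j =>
    hk (idx j) (Finset.mem_image_of_mem idx (Finset.mem_univ j)) (hidx j)
  -- the intersection of N₁ with N k, as a submodule of N k
  set P : Submodule R ↥(N k) := Submodule.comap (N k).subtype N₁ with hP
  set f : ↥P →ₗ[R] M := (N k).subtype.comp P.subtype with hfdef
  have hmem : ∀ x : ↥P, f x ∈ N₁ := fun x => x.2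
  set ψ : ↥P →ₗ[R] ↥N₁ := LinearMap.codRestrict N₁ f hmem with hψdef
  set φ : ↥P →ₗ[R] ↥N₁ ⧸ N₂ := N₂.mkQ.comp ψ with hφ
  have hsurj : Function.Surjective φ := by
    intro q
    choose a ha using fun j : Fin n =>
      Ideal.Quotient.mk_surjective (I := Ideal.span {π j}) (e q j)
    have h1 : (Submodule.Quotient.mk (∑ j, a j • z j) : ↥N₁ ⧸ N₂)
        = ∑ j, a j • e.symm (Pi.single j 1) := by
      rw [← N₂.mkQ_apply, map_sum]
      simp only [N₂.mkQ_apply, Submodule.Quotient.mk_smul, hzspec]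
    have hone : ∀ j : Fin n, (a j • (1 : R ⧸ Ideal.span {π j}))
        = Ideal.Quotient.mk (Ideal.span {π j}) (a j) := by
      intro j
      rw [← map_one (Ideal.Quotient.mk (Ideal.span {π j})), ← Ideal.Quotient.mk_eq_mk,
        ← Submodule.Quotient.mk_smul, Ideal.Quotient.mk_eq_mk, smul_eq_mul, mul_one]
    have key : q = Submodule.Quotient.mk (∑ j, a j • z j) := by
      apply e.injective
      rw [h1, map_sum]
      simp only [map_smul, LinearEquiv.apply_symm_apply]
      simp_rw [← Pi.single_smul, hone, ha]
      exact (Finset.univ_sum_single (e q)).symm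
    have hwNk : (∑ j, a j • ((z j : M))) ∈ N k :=
      sum_mem fun j _ => Submodule.smul_mem _ _ (hzk j)
    have hwN₁ : (∑ j, a j • ((z j : M))) ∈ N₁ :=
      sum_mem fun j _ => Submodule.smul_mem _ _ (z j).2
    refine ⟨⟨⟨∑ j, a j • ((z j : M)), hwNk⟩, hwN₁⟩, ?_⟩
    have hψ : ψ ⟨⟨∑ j, a j • ((z j : M)), hwNk⟩, hwN₁⟩ = ∑ j, a j • z j := by
      apply Subtype.ext
      simp only [hψdef, LinearMap.codRestrict_apply, hfdef, LinearMap.coe_comp,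
        Function.comp_apply, Submodule.coe_subtype]
      push_cast
      rfl
    show N₂.mkQ (ψ _) = q
    rw [hψ, key, N₂.mkQ_apply]
  have hmem' : (∏ i, v (π i)) ∈ contentSet R v ↥(N k) :=
    ⟨P, LinearMap.ker φ, n, π,
      ⟨(φ.quotKerEquivOfSurjective hsurj).trans e⟩, rfl⟩
  calc ⨅ i, content R v ↥(N i)
      ≤ content R v ↥(N k) := ciInf_le (OrderBot.bddBelow _) k
    _ ≤ ∏ i, v (π i) := csInf_le (OrderBot.bddBelow _) hmem'

/-- If a `K°`-module `M` is the union of a directed (filtered) family of submodules `Mᵢ`, then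
`cont(M) = infᵢ cont(Mᵢ)`. -/
theorem content_of_directed_union
    {K : Type*} [Field K] (vK : Valuation K ℝ≥0)
    {M : Type*} [AddCommGroup M] [Module ↥vK.integer M]
    {ι : Type*} [Nonempty ι] (N : ι → Submodule ↥vK.integer M)
    (hdir : ∀ i j, ∃ k, N i ≤ N k ∧ N j ≤ N k)
    (hunion : ∀ x : M, ∃ i, x ∈ N i) :
    content ↥vK.integer (fun a => vK ↑a) M
      = ⨅ i, content ↥vK.integer (fun a => vK ↑a) ↥(N i) :=
  content_of_directed_union_gen (R := ↥vK.integer) (fun a => vK ↑a) N hdir hunion
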